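/- Let α ∈ ℂ. Define c, c' : ℕ × ℕ → ℂ by c(j,l) = α^{j+l} · 2^{-(j+l)/2} · √(Nat.choose (j+l) j / (j+l)!) · (1+(-1)^l) and c'(j,l) = α^{j+l} · 2^{-(j+l)/2} · √(Nat.choose (j+l) j / (j+l)!) · (1-(-1)^l). Then there exist functions f, g, g' : ℕ → ℂ, explicitly f(j) = (α/√2)^j/√(j!), g(l) = (α/√2)^l (1+(-1)^l)/√(l!), g'(l) = (α/√2)^l (1-(-1)^l)/√(l!), such that c(j,l) = f(j)·g(l) and c'(j,l) = f(j)·g'(l) for all (j,l) ∈ ℕ × ℕ. In particular, both output states are product states with the same Alice-mode factor f, so Alice's reduced statistics are identical for correlated and anti-correlated inputs. (Hence the coherent NOON state (|α⟩|0⟩+|0⟩|α⟩)/√𝒩' furnishes no violation of the GYNI inequality in the protocol.) -/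

import Mathlib

lemma two_rpow_eq (n : ℕ) : (2:ℝ) ^ (-(n:ℝ)/2) = (Real.sqrt 2)⁻¹ ^ n := by
  have hb : (2:ℝ) ^ (-(1/2):ℝ) = (Real.sqrt 2)⁻¹ := by
    rw [Real.rpow_neg (by norm_num), Real.sqrt_eq_rpow]
  rw [show -(n:ℝ)/2 = (-(1/2)) * (n:ℝ) by ring, Real.rpow_mul (by norm_num),
    hb, Real.rpow_natCast]

lemma sqrt_choose (j l : ℕ) :
    Real.sqrt ((Nat.choose (j+l) j : ℝ)/(Nat.factorial (j+l):ℝ)) =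
    (Real.sqrt (Nat.factorial j))⁻¹ * (Real.sqrt (Nat.factorial l))⁻¹ := by
  have h : (Nat.choose (j+l) j : ℝ)/(Nat.factorial (j+l):ℝ)
      = ((Nat.factorial j : ℝ) * (Nat.factorial l : ℝ))⁻¹ := by
    have := Nat.choose_mul_factorial_mul_factorial (Nat.le_add_right j l)
    have h2 : ((j+l).choose j : ℝ) * (j.factorial : ℝ) * ((j+l-j).factorial : ℝ)
        = ((j+l).factorial : ℝ) := by exact_mod_cast congrArg Nat.cast this
    rw [Nat.add_sub_cancel_left] at h2
    have hj : (j.factorial : ℝ) ≠ 0 := by positivity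
    have hl : (l.factorial : ℝ) ≠ 0 := by positivity
    have hn : ((j+l).factorial : ℝ) ≠ 0 := by positivity
    field_simp
    linarith [h2]
  rw [h, Real.sqrt_inv, Real.sqrt_mul (by positivity), mul_inv]

open scoped BigOperators

theorem coherent_NOON_output_is_product
    (α : ℂ) (c c' : ℕ × ℕ → ℂ)
    (hc : ∀ j l : ℕ,
      c (j, l) = α ^ (j + l) * (((2 : ℝ) ^ (-((j + l : ℕ) : ℝ) / 2) : ℝ) : ℂ) *
        ((Real.sqrt ((Nat.choose (j + l) j : ℝ) / (Nat.factorial (j + l) : ℝ)) : ℝ) : ℂ) *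
        (1 + (-1 : ℂ) ^ l))
    (hc' : ∀ j l : ℕ,
      c' (j, l) = α ^ (j + l) * (((2 : ℝ) ^ (-((j + l : ℕ) : ℝ) / 2) : ℝ) : ℂ) *
        ((Real.sqrt ((Nat.choose (j + l) j : ℝ) / (Nat.factorial (j + l) : ℝ)) : ℝ) : ℂ) *
        (1 - (-1 : ℂ) ^ l)) :
    ∃ f g g' : ℕ → ℂ,
      (∀ j : ℕ, f j = (α / (Real.sqrt 2 : ℂ)) ^ j / ((Real.sqrt (Nat.factorial j) : ℝ) : ℂ)) ∧
      (∀ l : ℕ, g l = (α / (Real.sqrt 2 : ℂ)) ^ l * (1 + (-1 : ℂ) ^ l) /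
        ((Real.sqrt (Nat.factorial l) : ℝ) : ℂ)) ∧
      (∀ l : ℕ, g' l = (α / (Real.sqrt 2 : ℂ)) ^ l * (1 - (-1 : ℂ) ^ l) /
        ((Real.sqrt (Nat.factorial l) : ℝ) : ℂ)) ∧
      (∀ j l : ℕ, c (j, l) = f j * g l ∧ c' (j, l) = f j * g' l) := by
  refine ⟨fun j => (α / (Real.sqrt 2 : ℂ)) ^ j / ((Real.sqrt (Nat.factorial j) : ℝ) : ℂ),
    fun l => (α / (Real.sqrt 2 : ℂ)) ^ l * (1 + (-1 : ℂ) ^ l) /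
      ((Real.sqrt (Nat.factorial l) : ℝ) : ℂ),
    fun l => (α / (Real.sqrt 2 : ℂ)) ^ l * (1 - (-1 : ℂ) ^ l) /
      ((Real.sqrt (Nat.factorial l) : ℝ) : ℂ),
    fun _ => rfl, fun _ => rfl, fun _ => rfl, fun j l => ?_⟩
  have h2 : ((Real.sqrt 2 : ℝ) : ℂ) ≠ 0 :=
    Complex.ofReal_ne_zero.mpr (by positivity)
  have hj : ((Real.sqrt (Nat.factorial j) : ℝ) : ℂ) ≠ 0 :=
    Complex.ofReal_ne_zero.mpr (by positivity)
  have hl : ((Real.sqrt (Nat.factorial l) : ℝ) : ℂ) ≠ 0 :=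
    Complex.ofReal_ne_zero.mpr (by positivity)
  constructor
  · rw [hc j l, two_rpow_eq, sqrt_choose]
    push_cast
    rw [pow_add, div_pow, div_pow]
    field_simp
    have ej : ((Real.sqrt 2 : ℝ) : ℂ) ^ j * ((Real.sqrt 2 : ℝ) : ℂ)⁻¹ ^ j = 1 := by
      rw [← mul_pow, mul_inv_cancel₀ h2, one_pow]
    have el : ((Real.sqrt 2 : ℝ) : ℂ) ^ l * ((Real.sqrt 2 : ℝ) : ℂ)⁻¹ ^ l = 1 := by
      rw [← mul_pow, mul_inv_cancel₀ h2, one_pow]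
    linear_combination (α ^ j * α ^ l * (1 + (-1 : ℂ) ^ l)) *
      (((Real.sqrt 2 : ℝ) : ℂ) ^ l * ((Real.sqrt 2 : ℝ) : ℂ)⁻¹ ^ l) * ej +
      (α ^ j * α ^ l * (1 + (-1 : ℂ) ^ l)) * el
  · rw [hc' j l, two_rpow_eq, sqrt_choose]
    push_cast
    rw [pow_add, div_pow, div_pow]
    field_simp
    have ej : ((Real.sqrt 2 : ℝ) : ℂ) ^ j * ((Real.sqrt 2 : ℝ) : ℂ)⁻¹ ^ j = 1 := by
      rw [← mul_pow, mul_inv_cancel₀ h2, one_pow]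
    have el : ((Real.sqrt 2 : ℝ) : ℂ) ^ l * ((Real.sqrt 2 : ℝ) : ℂ)⁻¹ ^ l = 1 := by
      rw [← mul_pow, mul_inv_cancel₀ h2, one_pow]
    linear_combination (α ^ j * α ^ l * (1 - (-1 : ℂ) ^ l)) *
      (((Real.sqrt 2 : ℝ) : ℂ) ^ l * ((Real.sqrt 2 : ℝ) : ℂ)⁻¹ ^ l) * ej +
      (α ^ j * α ^ l * (1 - (-1 : ℂ) ^ l)) * el
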